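/- Comonotonic additivity of quantiles: let (Ω, 𝓕, P) be a probability space, Z : Ω → ℝ a random variable, and f, g : ℝ → ℝ nondecreasing (hence Borel measurable) functions. Set X = f ∘ Z and Y = g ∘ Z (a comonotonic pair). Then for every τ ∈ (0,1), the τ-quantile of the sum equals the sum of the τ-quantiles: q_{X+Y}(τ) = q_X(τ) + q_Y(τ). -/

import Mathlib

open MeasureTheory

/-- The (lower) `τ`-quantile of a probability measure `μ` on `ℝ`:
`q(μ, τ) = sInf {x | τ ≤ μ((-∞, x])}`. -/
noncomputable def lowerQuantile (μ : Measure ℝ) (τ : ℝ) : ℝ :=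
  sInf {x : ℝ | τ ≤ (μ (Set.Iic x)).toReal}

open Set Filter ProbabilityTheory Topology

section Aux

variable {μ : Measure ℝ} [IsProbabilityMeasure μ] {τ : ℝ}

lemma lowerQuantile_set_eq (μ : Measure ℝ) [IsProbabilityMeasure μ] (τ : ℝ) :
    {x : ℝ | τ ≤ (μ (Set.Iic x)).toReal} = {x : ℝ | τ ≤ cdf μ x} := by
  ext x; simp [cdf_eq_real, measureReal_def]

lemma lowerQuantile_nonempty (hτ : τ ∈ Set.Ioo (0:ℝ) 1) :
    {x : ℝ | τ ≤ cdf μ x}.Nonempty := by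
  obtain ⟨x, hx⟩ := ((tendsto_cdf_atTop μ).eventually_const_le hτ.2).exists
  exact ⟨x, hx⟩

lemma lowerQuantile_bddBelow (hτ : τ ∈ Set.Ioo (0:ℝ) 1) :
    BddBelow {x : ℝ | τ ≤ cdf μ x} := by
  obtain ⟨x₀, hx₀⟩ := ((tendsto_cdf_atBot μ).eventually_lt_const hτ.1).exists
  refine ⟨x₀, fun x hx => ?_⟩
  by_contra h
  push_neg at h
  exact absurd (le_trans hx (monotone_cdf μ h.le)) (not_le.2 hx₀)

/-- The lower quantile attains its defining inequality (right continuity of the cdf). -/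
lemma cdf_lowerQuantile_ge (hτ : τ ∈ Set.Ioo (0:ℝ) 1) :
    τ ≤ cdf μ (lowerQuantile μ τ) := by
  set q := lowerQuantile μ τ with hq
  have hqdef : q = sInf {x : ℝ | τ ≤ cdf μ x} := by
    rw [hq, lowerQuantile, lowerQuantile_set_eq]
  have hne := lowerQuantile_nonempty (μ := μ) hτ
  have hbdd := lowerQuantile_bddBelow (μ := μ) hτ
  have hmem : ∀ x ∈ Set.Ioi q, τ ≤ cdf μ x := by
    intro x hx
    obtain ⟨s, hs, hsx⟩ := exists_lt_of_csInf_lt hne (hqdef ▸ hx)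
    exact le_trans hs (monotone_cdf μ hsx.le)
  have hrc : Tendsto (cdf μ) (𝓝[>] q) (𝓝 (cdf μ q)) :=
    ((cdf μ).right_continuous q).tendsto.mono_left
      (nhdsWithin_mono q Set.Ioi_subset_Ici_self)
  exact ge_of_tendsto hrc (eventually_nhdsWithin_of_forall hmem)

lemma cdf_lt_of_lt_lowerQuantile (hτ : τ ∈ Set.Ioo (0:ℝ) 1) {x : ℝ}
    (hx : x < lowerQuantile μ τ) : cdf μ x < τ := by
  by_contra h
  push_neg at h
  have : lowerQuantile μ τ ≤ x := by
    rw [lowerQuantile, lowerQuantile_set_eq]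
    exact csInf_le (lowerQuantile_bddBelow hτ) h
  exact absurd hx (not_lt.2 this)

end Aux

section Comp

variable {Ω : Type*} [MeasurableSpace Ω] (P : Measure Ω) [IsProbabilityMeasure P]
  (Z : Ω → ℝ) (hZ : Measurable Z) {τ : ℝ}

include hZ

/-- If the measure strictly below the quantile `q` of `Z` is `< τ`, then the quantile of
`φ ∘ Z` is `φ q`. -/
lemma lowerQuantile_comp_of_lt (φ : ℝ → ℝ) (hφ : Monotone φ) (hτ : τ ∈ Set.Ioo (0:ℝ) 1)
    (hlt : ((P.map Z) (Set.Iio (lowerQuantile (P.map Z) τ))).toReal < τ) :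
    lowerQuantile (P.map (fun ω => φ (Z ω))) τ = φ (lowerQuantile (P.map Z) τ) := by
  have hmapZ : IsProbabilityMeasure (P.map Z) := Measure.isProbabilityMeasure_map hZ.aemeasurable
  set q := lowerQuantile (P.map Z) τ with hqdef
  have hφZ : Measurable fun ω => φ (Z ω) := (hφ.measurable).comp hZ
  have hmapφ : IsProbabilityMeasure (P.map (fun ω => φ (Z ω))) :=
    Measure.isProbabilityMeasure_map hφZ.aemeasurable
  rw [lowerQuantile]
  refine IsLeast.csInf_eq ⟨?_, ?_⟩
  · -- τ ≤ F_{φZ}(φ q)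
    have h1 : τ ≤ ((P.map Z) (Set.Iic q)).toReal := by
      have := cdf_lowerQuantile_ge (μ := P.map Z) hτ
      rwa [cdf_eq_real, measureReal_def] at this
    have hsub : Z ⁻¹' Set.Iic q ⊆ (fun ω => φ (Z ω)) ⁻¹' Set.Iic (φ q) :=
      fun ω hω => hφ hω
    have : (P.map Z) (Set.Iic q) ≤ (P.map (fun ω => φ (Z ω))) (Set.Iic (φ q)) := by
      rw [Measure.map_apply hZ measurableSet_Iic,
        Measure.map_apply hφZ measurableSet_Iic]
      exact measure_mono hsub
    refine le_trans h1 (ENNReal.toReal_mono (measure_ne_top _ _) this)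
  · -- lower bound
    intro y hy
    by_contra h
    push_neg at h
    have hsub : (fun ω => φ (Z ω)) ⁻¹' Set.Iic y ⊆ Z ⁻¹' Set.Iio q := by
      intro ω hω
      by_contra hω'
      simp only [Set.mem_preimage, Set.mem_Iio, not_lt] at hω'
      exact absurd (le_trans (hφ hω') hω) (not_le.2 h)
    have hle : (P.map (fun ω => φ (Z ω))) (Set.Iic y) ≤ (P.map Z) (Set.Iio q) := by
      rw [Measure.map_apply hZ measurableSet_Iio,
        Measure.map_apply hφZ measurableSet_Iic]
      exact measure_mono hsub
    have := le_trans hy (ENNReal.toReal_mono (measure_ne_top _ _) hle)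
    exact absurd this (not_le.2 hlt)

/-- If the measure strictly below the quantile `q` of `Z` is `≥ τ`, then the quantile of
`φ ∘ Z` is the left limit `sSup (φ '' Iio q)`. -/
lemma lowerQuantile_comp_of_ge (φ : ℝ → ℝ) (hφ : Monotone φ) (hτ : τ ∈ Set.Ioo (0:ℝ) 1)
    (hge : τ ≤ ((P.map Z) (Set.Iio (lowerQuantile (P.map Z) τ))).toReal) :
    lowerQuantile (P.map (fun ω => φ (Z ω))) τ
      = sSup (φ '' Set.Iio (lowerQuantile (P.map Z) τ)) := by
  have hmapZ : IsProbabilityMeasure (P.map Z) := Measure.isProbabilityMeasure_map hZ.aemeasurable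
  set q := lowerQuantile (P.map Z) τ with hqdef
  have hφZ : Measurable fun ω => φ (Z ω) := (hφ.measurable).comp hZ
  have hmapφ : IsProbabilityMeasure (P.map (fun ω => φ (Z ω))) :=
    Measure.isProbabilityMeasure_map hφZ.aemeasurable
  have hne : (φ '' Set.Iio q).Nonempty := ⟨φ (q - 1), ⟨q - 1, by simp, rfl⟩⟩
  have hbdd : BddAbove (φ '' Set.Iio q) := by
    refine ⟨φ q, fun y hy => ?_⟩
    obtain ⟨x, hx, rfl⟩ := hy
    exact hφ (le_of_lt hx)
  set s := sSup (φ '' Set.Iio q) with hsdef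
  rw [lowerQuantile]
  refine IsLeast.csInf_eq ⟨?_, ?_⟩
  · -- τ ≤ F_{φZ}(s)
    have hsub : Z ⁻¹' Set.Iio q ⊆ (fun ω => φ (Z ω)) ⁻¹' Set.Iic s := by
      intro ω hω
      exact le_csSup hbdd ⟨Z ω, hω, rfl⟩
    have hle : (P.map Z) (Set.Iio q) ≤ (P.map (fun ω => φ (Z ω))) (Set.Iic s) := by
      rw [Measure.map_apply hZ measurableSet_Iio,
        Measure.map_apply hφZ measurableSet_Iic]
      exact measure_mono hsub
    exact le_trans hge (ENNReal.toReal_mono (measure_ne_top _ _) hle)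
  · -- lower bound
    intro y hy
    refine csSup_le hne ?_
    rintro _ ⟨x, hx, rfl⟩
    by_contra h
    push_neg at h
    have hsub : (fun ω => φ (Z ω)) ⁻¹' Set.Iic y ⊆ Z ⁻¹' Set.Iic x := by
      intro ω hω
      by_contra hω'
      simp only [Set.mem_preimage, Set.mem_Iic, not_le] at hω'
      exact absurd (le_trans (hφ hω'.le) hω) (not_le.2 h)
    have hle : (P.map (fun ω => φ (Z ω))) (Set.Iic y) ≤ (P.map Z) (Set.Iic x) := by
      rw [Measure.map_apply hZ measurableSet_Iic,
        Measure.map_apply hφZ measurableSet_Iic]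
      exact measure_mono hsub
    have h1 : τ ≤ ((P.map Z) (Set.Iic x)).toReal :=
      le_trans hy (ENNReal.toReal_mono (measure_ne_top _ _) hle)
    have h2 : ((P.map Z) (Set.Iic x)).toReal < τ := by
      rw [← measureReal_def, ← cdf_eq_real]
      exact cdf_lt_of_lt_lowerQuantile hτ hx
    exact absurd h1 (not_le.2 h2)

end Comp

/-- Left limits of monotone functions are additive. -/
lemma sSup_image_add_monotone {f g : ℝ → ℝ} (hf : Monotone f) (hg : Monotone g) (q : ℝ) :
    sSup ((fun x => f x + g x) '' Set.Iio q)
      = sSup (f '' Set.Iio q) + sSup (g '' Set.Iio q) := by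
  have hneI : (Set.Iio q).Nonempty := ⟨q - 1, by simp⟩
  have hnef : (f '' Set.Iio q).Nonempty := hneI.image f
  have hneg : (g '' Set.Iio q).Nonempty := hneI.image g
  have hnefg : ((fun x => f x + g x) '' Set.Iio q).Nonempty := hneI.image _
  have hbdf : BddAbove (f '' Set.Iio q) :=
    ⟨f q, by rintro _ ⟨x, hx, rfl⟩; exact hf hx.le⟩
  have hbdg : BddAbove (g '' Set.Iio q) :=
    ⟨g q, by rintro _ ⟨x, hx, rfl⟩; exact hg hx.le⟩
  have hbdfg : BddAbove ((fun x => f x + g x) '' Set.Iio q) :=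
    ⟨f q + g q, by rintro _ ⟨x, hx, rfl⟩; exact add_le_add (hf hx.le) (hg hx.le)⟩
  refine le_antisymm ?_ ?_
  · refine csSup_le hnefg ?_
    rintro _ ⟨x, hx, rfl⟩
    exact add_le_add (le_csSup hbdf ⟨x, hx, rfl⟩) (le_csSup hbdg ⟨x, hx, rfl⟩)
  · have key : ∀ x ∈ Set.Iio q,
        f x + sSup (g '' Set.Iio q) ≤ sSup ((fun x => f x + g x) '' Set.Iio q) := by
      intro x hx
      rw [← le_sub_iff_add_le']
      refine csSup_le hneg ?_
      rintro _ ⟨y, hy, rfl⟩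
      rw [le_sub_iff_add_le']
      calc f x + g y ≤ f (max x y) + g (max x y) :=
            add_le_add (hf (le_max_left x y)) (hg (le_max_right x y))
        _ ≤ _ := le_csSup hbdfg ⟨max x y, Set.mem_Iio.2 (max_lt hx hy), rfl⟩
    have : sSup (f '' Set.Iio q)
        ≤ sSup ((fun x => f x + g x) '' Set.Iio q) - sSup (g '' Set.Iio q) := by
      refine csSup_le hnef ?_
      rintro _ ⟨x, hx, rfl⟩
      rw [le_sub_iff_add_le]
      exact key x hx
    linarith

/-- Comonotonic additivity of quantiles: if `X = f ∘ Z` and `Y = g ∘ Z` with `f, g`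
nondecreasing (a comonotonic pair), then for every `τ ∈ (0,1)` the `τ`-quantile of the
law of `X + Y` equals the sum of the `τ`-quantiles of the laws of `X` and `Y`. -/
theorem comonotone_quantile_additive
    {Ω : Type*} [MeasurableSpace Ω] (P : Measure Ω) [IsProbabilityMeasure P]
    (Z : Ω → ℝ) (hZ : Measurable Z)
    (f g : ℝ → ℝ) (hf : Monotone f) (hg : Monotone g)
    (τ : ℝ) (hτ : τ ∈ Set.Ioo (0 : ℝ) 1) :
    lowerQuantile (P.map (fun ω => f (Z ω) + g (Z ω))) τ
      = lowerQuantile (P.map (fun ω => f (Z ω))) τ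
        + lowerQuantile (P.map (fun ω => g (Z ω))) τ := by
  have hfg : Monotone fun x => f x + g x := hf.add hg
  rcases lt_or_ge ((P.map Z) (Set.Iio (lowerQuantile (P.map Z) τ))).toReal τ with h | h
  · rw [lowerQuantile_comp_of_lt P Z hZ f hf hτ h,
      lowerQuantile_comp_of_lt P Z hZ g hg hτ h,
      lowerQuantile_comp_of_lt P Z hZ (fun x => f x + g x) hfg hτ h]
  · rw [lowerQuantile_comp_of_ge P Z hZ f hf hτ h,
      lowerQuantile_comp_of_ge P Z hZ g hg hτ h,
      lowerQuantile_comp_of_ge P Z hZ (fun x => f x + g x) hfg hτ h]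
    exact sSup_image_add_monotone hf hg _
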